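/- Let ρ ≥ 1 and m ≥ 1 be integers, let A be a ρ × ρ matrix with integer entries, and let w ∈ ℤ^ρ. Let μ, μ' ∈ ℂ be such that μ is algebraic over ℚ and μ' is a root of the minimal polynomial of μ over ℚ (i.e., μ' is a Galois conjugate of μ). Suppose there exists a vector v ∈ ℂ^ρ such that the dot product w·v ≠ 0 and (μ·I_ρ − A)^m · v = 0 (where A is viewed as a complex matrix). Then there exists a vector v' ∈ ℂ^ρ such that w·v' ≠ 0 and (μ'·I_ρ − A)^m · v' = 0. -/

import Mathlib

/-- A copy of `ℂ`, used as the target of `IsAlgClosed.lift` to avoid instance clashes. -/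
def Ccopy : Type := ℂ

noncomputable instance : Field Ccopy := inferInstanceAs (Field ℂ)
instance : IsAlgClosed Ccopy := inferInstanceAs (IsAlgClosed ℂ)

set_option maxHeartbeats 1000000 in
set_option synthInstance.maxHeartbeats 400000 in
/-- An automorphism of a subring of `ℂ` extends to a ring endomorphism of `ℂ`. -/
lemma extend_field (F : Type*) [CommRing F] [Algebra F ℂ]
    (hKinj : Function.Injective (algebraMap F ℂ)) (e : F ≃+* F) :
    ∃ σ : ℂ →+* ℂ, ∀ x : F, σ (algebraMap F ℂ x) = algebraMap F ℂ (e x) := by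
  classical
  haveI : Nontrivial F := ⟨⟨1, 0, fun h => one_ne_zero (α := ℂ)
    (by rw [← map_one (algebraMap F ℂ), h, map_zero])⟩⟩
  haveI : FaithfulSMul F ℂ := (faithfulSMul_iff_algebraMap_injective F ℂ).2 hKinj
  obtain ⟨s, hs⟩ := exists_isTranscendenceBasis F ℂ
  set T := Algebra.adjoin F (Set.range (Subtype.val : s → ℂ)) with hTdef
  haveI halgTC : Algebra.IsAlgebraic ↥T ℂ := hs.isAlgebraic
  set ψ' : MvPolynomial s F →+* ℂ :=
    MvPolynomial.eval₂Hom ((algebraMap F ℂ).comp e.toRingHom)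
      (fun i => (i : ℂ)) with hψ'def
  set ψ : ↥T →+* ℂ := ψ'.comp hs.1.aevalEquiv.symm.toRingEquiv.toRingHom with hψdef
  have hψ'eq : ∀ P : MvPolynomial s F,
      ψ' P = MvPolynomial.aeval (fun i : s => (i : ℂ))
        (MvPolynomial.map e.toRingHom P) := by
    intro P
    rw [MvPolynomial.aeval_def, MvPolynomial.eval₂_map]
    rfl
  have hψ'inj : Function.Injective ψ' := by
    intro P Q h
    rw [hψ'eq, hψ'eq] at h
    exact MvPolynomial.map_injective _ e.injective (hs.1 h)
  have hψinj : Function.Injective ψ :=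
    hψ'inj.comp hs.1.aevalEquiv.symm.injective
  haveI h1 : Module.IsTorsionFree ↥T ℂ :=
    (Module.isTorsionFree_iff_algebraMap_injective (R := ↥T) (A := ℂ)).2 Subtype.val_injective
  letI : Algebra ↥T Ccopy := (ψ : ↥T →+* Ccopy).toAlgebra
  haveI h2 : Module.IsTorsionFree ↥T Ccopy :=
    (Module.isTorsionFree_iff_algebraMap_injective (R := ↥T) (A := Ccopy)).2 hψinj
  let σal : ℂ →ₐ[↥T] Ccopy := IsAlgClosed.lift
  refine ⟨(σal.toRingHom : ℂ →+* Ccopy), fun x => ?_⟩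
  set xT : ↥T := algebraMap F ↥T x with hxTdef
  have h3 : algebraMap ↥T ℂ xT = algebraMap F ℂ x := by
    rw [hxTdef, ← IsScalarTower.algebraMap_apply]
  have h4 : σal.toRingHom (algebraMap F ℂ x) = ψ xT := by
    rw [← h3]
    exact σal.commutes xT
  have hsymm : hs.1.aevalEquiv.symm (algebraMap F ↥T x)
      = MvPolynomial.C x := by
    have := hs.1.aevalEquiv.symm.commutes x
    rwa [MvPolynomial.algebraMap_eq] at this
  have h5 : ψ xT = algebraMap F ℂ (e x) := by
    rw [hψdef, hxTdef]
    simp only [RingHom.comp_apply]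
    rw [show (hs.1.aevalEquiv.symm.toRingEquiv.toRingHom : ↥T →+* MvPolynomial s F)
        (algebraMap F ↥T x) = MvPolynomial.C x from hsymm]
    rw [hψ'def]
    simp
  exact h4.trans h5

set_option maxHeartbeats 1000000 in
set_option synthInstance.maxHeartbeats 400000 in
open Polynomial in
/-- Any Galois conjugation of an algebraic number extends to a ring endomorphism of `ℂ`. -/
lemma exists_ringHom_complex_conj {μ μ' : ℂ} (halg : IsAlgebraic ℚ μ)
    (hconj : Polynomial.aeval μ' (minpoly ℚ μ) = 0) :
    ∃ σ : ℂ →+* ℂ, σ μ = μ' := by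
  classical
  have hpmonic : (minpoly ℚ μ).Monic := minpoly.monic halg.isIntegral
  have hp0 : minpoly ℚ μ ≠ 0 := hpmonic.ne_zero
  have hirr : Irreducible (minpoly ℚ μ) := minpoly.irreducible halg.isIntegral
  set Qb := AlgebraicClosure ℚ
  haveI hQbalg : Algebra.IsAlgebraic ℚ Qb := AlgebraicClosure.isAlgebraic ℚ
  haveI : IsAlgClosure ℚ Qb := ⟨inferInstance, hQbalg⟩
  haveI : Normal ℚ Qb := IsAlgClosure.normal ℚ _
  set j : Qb →ₐ[ℚ] ℂ := IsAlgClosed.lift with hjdef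
  have hsplit : ((minpoly ℚ μ).map (algebraMap ℚ Qb)).Splits :=
    IsAlgClosed.splits _
  have key : ∀ z : ℂ, Polynomial.aeval z (minpoly ℚ μ) = 0 →
      ∃ a : Qb, j a = z ∧ Polynomial.aeval a (minpoly ℚ μ) = 0 := by
    intro z hz
    have hzroot : z ∈ ((minpoly ℚ μ).map (algebraMap ℚ ℂ)).roots := by
      rw [Polynomial.mem_roots']
      exact ⟨(Polynomial.map_ne_zero_iff (algebraMap ℚ ℂ).injective).2 hp0,
        by rwa [Polynomial.IsRoot.def, Polynomial.eval_map, ← Polynomial.aeval_def]⟩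
    have hcast : (minpoly ℚ μ).map (algebraMap ℚ ℂ)
        = ((minpoly ℚ μ).map (algebraMap ℚ Qb)).map (j : Qb →+* ℂ) := by
      rw [Polynomial.map_map, j.comp_algebraMap]
    rw [hcast, hsplit.roots_map (j : Qb →+* ℂ), Multiset.mem_map] at hzroot
    obtain ⟨a, ha, hja⟩ := hzroot
    refine ⟨a, hja, ?_⟩
    have := (Polynomial.mem_roots'.1 ha).2
    rwa [Polynomial.IsRoot.def, Polynomial.eval_map, ← Polynomial.aeval_def] at this
  obtain ⟨a, hja, haroot⟩ := key μ (minpoly.aeval ℚ μ)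
  obtain ⟨b, hjb, hbroot⟩ := key μ' hconj
  have hminpoly_a : minpoly ℚ a = minpoly ℚ μ :=
    (minpoly.eq_of_irreducible_of_monic hirr haroot hpmonic).symm
  obtain ⟨σ₀, hσ₀⟩ : ∃ σ₀ : Qb ≃ₐ[ℚ] Qb, σ₀ a = b :=
    minpoly.exists_algEquiv_of_root' ⟨minpoly ℚ μ, hp0, haroot⟩ (by rwa [hminpoly_a])
  set K := j.range with hKdef
  set j' : Qb ≃ₐ[ℚ] ↥K := AlgEquiv.ofInjectiveField j with hj'def
  set e : ↥K ≃ₐ[ℚ] ↥K := j'.symm.trans (σ₀.trans j') with hedef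
  obtain ⟨σ, hσ⟩ := extend_field ↥K Subtype.val_injective (e.toRingEquiv : ↥K ≃+* ↥K)
  have hμK : μ ∈ K := ⟨a, hja⟩
  refine ⟨σ, ?_⟩
  have h8 := hσ ⟨μ, hμK⟩
  have h9 : algebraMap ↥K ℂ ⟨μ, hμK⟩ = μ := rfl
  rw [h9] at h8
  rw [h8]
  have h6 : j'.symm ⟨μ, hμK⟩ = a := by
    have : j' a = ⟨μ, hμK⟩ := by
      apply Subtype.ext
      show (j' a : ℂ) = μ
      rw [hj'def]
      exact hja
    rw [← this, AlgEquiv.symm_apply_apply]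
  show algebraMap ↥K ℂ ((e.toRingEquiv : ↥K ≃+* ↥K) ⟨μ, hμK⟩) = μ'
  have h10 : (e.toRingEquiv : ↥K ≃+* ↥K) ⟨μ, hμK⟩ = j' b := by
    show e ⟨μ, hμK⟩ = j' b
    rw [hedef]
    simp only [AlgEquiv.trans_apply, h6, hσ₀]
  rw [h10]
  show (j' b : ℂ) = μ'
  rw [hj'def]
  exact hjb

theorem stmt5 (ρ m : ℕ) (hρ : 1 ≤ ρ) (hm : 1 ≤ m)
    (A : Matrix (Fin ρ) (Fin ρ) ℤ) (w : Fin ρ → ℤ)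
    (μ μ' : ℂ) (halg : IsAlgebraic ℚ μ)
    (hconj : Polynomial.aeval μ' (minpoly ℚ μ) = 0)
    (hv : ∃ v : Fin ρ → ℂ,
      dotProduct (fun i => (w i : ℂ)) v ≠ 0 ∧
        ((μ • (1 : Matrix (Fin ρ) (Fin ρ) ℂ) - A.map (Int.cast : ℤ → ℂ)) ^ m).mulVec v = 0) :
    ∃ v' : Fin ρ → ℂ,
      dotProduct (fun i => (w i : ℂ)) v' ≠ 0 ∧
        ((μ' • (1 : Matrix (Fin ρ) (Fin ρ) ℂ) - A.map (Int.cast : ℤ → ℂ)) ^ m).mulVec v' = 0 := by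
  obtain ⟨σ, hσμ⟩ := exists_ringHom_complex_conj halg hconj
  obtain ⟨v, hwv, hMv⟩ := hv
  refine ⟨fun i => σ (v i), ?_, ?_⟩
  · have : dotProduct (fun i => (w i : ℂ)) (fun i => σ (v i))
        = σ (dotProduct (fun i => (w i : ℂ)) v) := by
      simp [dotProduct, map_sum, map_mul]
    rw [this]
    intro h
    exact hwv (σ.injective (by rwa [map_zero]))
  · have hmap : σ.mapMatrix ((μ • (1 : Matrix (Fin ρ) (Fin ρ) ℂ) - A.map (Int.cast : ℤ → ℂ)) ^ m)
        = (μ' • (1 : Matrix (Fin ρ) (Fin ρ) ℂ) - A.map (Int.cast : ℤ → ℂ)) ^ m := by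
      have hbase : σ.mapMatrix (μ • (1 : Matrix (Fin ρ) (Fin ρ) ℂ) - A.map (Int.cast : ℤ → ℂ))
          = μ' • (1 : Matrix (Fin ρ) (Fin ρ) ℂ) - A.map (Int.cast : ℤ → ℂ) := by
        ext i j
        by_cases h : i = j <;>
          simp [RingHom.mapMatrix_apply, Matrix.sub_apply, Matrix.smul_apply,
            Matrix.one_apply, Matrix.map_apply, h, hσμ]
      rw [map_pow, hbase]
    have key : ∀ (M : Matrix (Fin ρ) (Fin ρ) ℂ) (u : Fin ρ → ℂ),
        (σ.mapMatrix M).mulVec (fun i => σ (u i)) = fun j => σ (M.mulVec u j) := by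
      intro M u
      funext jj
      simp [Matrix.mulVec, dotProduct, map_sum, map_mul]
    have h0 := key ((μ • (1 : Matrix (Fin ρ) (Fin ρ) ℂ) - A.map (Int.cast : ℤ → ℂ)) ^ m) v
    rw [hmap] at h0
    rw [h0]
    funext jj
    rw [congrFun hMv jj]
    simp
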